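/- Let M = π^{4/3} and g(x) = cos(μx) where μ² = π²/4 − π^{4/3}·δ^{2/3}. There exists a constant C₂ and δ₀ > 0 such that for all 0 < δ < δ₀: ∫₀¹ g'(x)² dx − (π²/4 − M·δ^{2/3} − C₂·δ^{4/3})·∫₀¹ g(x)² dx + (√M/(2δ^{2/3}))·g(1)² ≤ 0. -/

import Mathlib

open MeasureTheory Real Set intervalIntegral

lemma int_sin_sq' (μ : ℝ) (hμ : μ ≠ 0) :
    ∫ x in (0:ℝ)..1, Real.sin (μ*x)^2 = 1/2 - Real.sin μ * Real.cos μ/(2*μ) := by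
  rw [intervalIntegral.integral_comp_mul_left (fun y => Real.sin y ^ 2) hμ]
  simp [integral_sin_sq]
  field_simp
  ring

lemma int_cos_sq' (μ : ℝ) (hμ : μ ≠ 0) :
    ∫ x in (0:ℝ)..1, Real.cos (μ*x)^2 = 1/2 + Real.sin μ * Real.cos μ/(2*μ) := by
  rw [intervalIntegral.integral_comp_mul_left (fun y => Real.cos y ^ 2) hμ]
  simp [integral_cos_sq]
  field_simp
  ring

set_option maxHeartbeats 1000000 in
lemma key_poly (ε b : ℝ) (hε0 : 0 < ε) (hε1 : ε < 1) (hblow : 1 - ε^2/2 ≤ b) :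
    π^5 ≤ π^3*((π - ε)*(π - 2*ε)*b) + 100*ε*(π - ε)^3 := by
  have h1 := pi_gt_d6
  have h2 := pi_lt_d2
  have hπ2 : π^2 < 9.9225 := by nlinarith
  have hπ3 : π^3 < 32 := by nlinarith [hπ2]
  have hπ4 : π^4 < 99 := by nlinarith [hπ2]
  have hπ5 : π^5 < 311 := by nlinarith [hπ4, hπ2]
  have hq3 : (π - 1)^3 ≤ (π - ε)^3 := by
    apply pow_le_pow_left₀ (by linarith) (by linarith)
  have hc1 : (9.8:ℝ) ≤ (π-1)^3 := by nlinarith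
  have h980 : 980*ε ≤ 100*ε*(π-ε)^3 := by
    have u1 := mul_le_mul_of_nonneg_left hc1 (by positivity : (0:ℝ) ≤ 100*ε)
    have u2 := mul_le_mul_of_nonneg_left hq3 (by positivity : (0:ℝ) ≤ 100*ε)
    nlinarith [u1, u2]
  have hfac : (0:ℝ) ≤ (π - ε)*(π - 2*ε) := by nlinarith
  have hmono : π^3*((π-ε)*(π-2*ε)*(1-ε^2/2)) ≤ π^3*((π-ε)*(π-2*ε)*b) := by
    have := mul_le_mul_of_nonneg_left hblow hfac
    nlinarith [pow_pos pi_pos 3]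
  have hpoly : π^5 ≤ π^3*((π-ε)*(π-2*ε)*(1-ε^2/2)) + 980*ε := by
    have ha : π^4*ε ≤ 99*ε := by nlinarith
    have hb' : π^5*ε^2 ≤ 311*ε^2 := by nlinarith [sq_nonneg ε]
    have hc : π^3*ε^4 ≤ 32*ε^4 := by nlinarith [pow_pos hε0 4]
    have hd : ε^2 ≤ ε := by nlinarith
    have he : ε^4 ≤ ε := by nlinarith [pow_pos hε0 2, sq_nonneg ε]
    have hf : (0:ℝ) ≤ π^3*ε^2 := by positivity
    have hg : (0:ℝ) ≤ π^4*ε^3 := by positivity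
    nlinarith [ha, hb', hc, hd, he, hf, hg]
  linarith

set_option maxHeartbeats 1000000 in
lemma aux_ineq (t P μ ε a b : ℝ) (ht0 : 0 < t) (hP0 : 0 < P)
    (hP3 : P^3 = π^2) (hP4 : P^4 ≤ π^3)
    (hμ0 : 0 < μ) (hμε : π - 2*ε = 2*μ)
    (hε0 : 0 < ε) (hε1 : ε < 1)
    (ha0 : 0 < a) (haε : a ≤ ε) (hb0 : 0 < b) (hblow : 1 - ε^2/2 ≤ b)
    (hPt : P^2 * t = ε * (π - ε)) :
    μ^2*(1/2 - b*a/(2*μ)) - (μ^2 + 100*t^2)*(1/2 + b*a/(2*μ)) + P*a^2/(2*t) ≤ 0 := by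
  have hq0 : 0 < π - ε := by nlinarith [pi_gt_three]
  have key := key_poly ε b hε0 hε1 hblow
  rw [hμε] at key
  have hmain : P*a^2/(2*t) ≤ μ*a*b + 50*t^2 := by
    rw [div_le_iff₀ (by positivity)]
    have h1' : a*a ≤ a*ε := mul_le_mul_of_nonneg_left haε ha0.le
    have h1 := mul_le_mul_of_nonneg_left h1' (le_of_lt (pow_pos pi_pos 5))
    have h2 := mul_le_mul_of_nonneg_left key (show (0:ℝ) ≤ a*ε by positivity)
    have h3 := mul_le_mul_of_nonneg_left haε
      (by positivity : (0:ℝ) ≤ 100*ε^2*(π-ε)^3)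
    have h4 : (ε*(π-ε))^2 ≤ t^2*π^3 := by
      have e1 : (ε*(π-ε))^2 = t^2 * P^4 := by rw [← hPt]; ring
      nlinarith [hP4, sq_nonneg t]
    have h5 : 100*(ε*(π-ε))^2*(ε*(π-ε)) ≤ 100*(t^2*π^3)*(ε*(π-ε)) :=
      mul_le_mul_of_nonneg_right (by nlinarith [h4]) (by positivity)
    have hbig : π^2*a^2*π^3 ≤ ((μ*a*b + 50*t^2)*(2*(ε*(π-ε))))*π^3 := by
      nlinarith [h1, h2, h3, h5]
    have hG : π^2*a^2 ≤ (μ*a*b + 50*t^2)*(2*(ε*(π-ε))) :=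
      le_of_mul_le_mul_right (by nlinarith [hbig]) (pow_pos pi_pos 3)
    have hXY : P*a^2*P^2 ≤ ((μ*a*b + 50*t^2)*(2*t))*P^2 := by
      calc P*a^2*P^2 = π^2*a^2 := by rw [← hP3]; ring
        _ ≤ (μ*a*b + 50*t^2)*(2*(ε*(π-ε))) := hG
        _ = ((μ*a*b+50*t^2)*(2*t))*P^2 := by rw [← hPt]; ring
    exact le_of_mul_le_mul_right hXY (by positivity)
  have hEeq : μ^2*(1/2 - b*a/(2*μ)) - (μ^2 + 100*t^2)*(1/2 + b*a/(2*μ))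
      = -(μ*a*b) - 100*t^2*(1/2 + b*a/(2*μ)) := by
    field_simp
    ring
  have hBge : 100*t^2*(1/2) ≤ 100*t^2*(1/2 + b*a/(2*μ)) := by
    have h : (0:ℝ) ≤ b*a/(2*μ) := by positivity
    nlinarith [sq_nonneg t]
  linarith [hmain, hBge, hEeq]

set_option maxHeartbeats 2000000 in
theorem stmt9 :
    ∃ C₂ : ℝ, ∃ δ₀ > (0:ℝ), ∀ δ : ℝ, 0 < δ → δ < δ₀ →
      (∫ x in (0:ℝ)..1,
          deriv (fun x => Real.cos
            (Real.sqrt (π ^ 2 / 4 - π ^ ((4:ℝ)/3) * δ ^ ((2:ℝ)/3)) * x)) x ^ 2)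
        - (π ^ 2 / 4 - π ^ ((4:ℝ)/3) * δ ^ ((2:ℝ)/3) - C₂ * δ ^ ((4:ℝ)/3))
            * (∫ x in (0:ℝ)..1, Real.cos
                (Real.sqrt (π ^ 2 / 4 - π ^ ((4:ℝ)/3) * δ ^ ((2:ℝ)/3)) * x) ^ 2)
        + (Real.sqrt (π ^ ((4:ℝ)/3)) / (2 * δ ^ ((2:ℝ)/3)))
            * Real.cos
                (Real.sqrt (π ^ 2 / 4 - π ^ ((4:ℝ)/3) * δ ^ ((2:ℝ)/3))) ^ 2
        ≤ 0 := by
  refine ⟨-100, 1/1000, by norm_num, ?_⟩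
  intro δ hδ0 hδ1
  have hπ1 : (1:ℝ) ≤ π := by nlinarith [pi_gt_three]
  -- t := δ^(2/3)
  set t : ℝ := δ ^ ((2:ℝ)/3) with ht_def
  have ht0 : 0 < t := Real.rpow_pos_of_pos hδ0 _
  have ht : t < 1/100 := by
    have h1 : t < (1/1000 : ℝ) ^ ((2:ℝ)/3) :=
      Real.rpow_lt_rpow hδ0.le hδ1 (by norm_num)
    have h2 : ((1/1000 : ℝ)) ^ ((2:ℝ)/3) = 1/100 := by
      have e : ((1/1000 : ℝ)) = (1/10 : ℝ) ^ (3:ℝ) := by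
        rw [show (3:ℝ) = ((3:ℕ):ℝ) by norm_num, Real.rpow_natCast]; norm_num
      rw [e, ← Real.rpow_mul (by norm_num)]
      norm_num
    linarith [h2 ▸ h1]
  have hδ43 : δ ^ ((4:ℝ)/3) = t^2 := by
    rw [ht_def, ← Real.rpow_natCast (δ ^ ((2:ℝ)/3)) 2, ← Real.rpow_mul hδ0.le]
    norm_num
  rw [hδ43]
  clear_value t
  clear hδ43 hδ1 ht_def
  -- P := π^(2/3)
  set P : ℝ := π ^ ((2:ℝ)/3) with hP_def
  have hP0 : 0 < P := Real.rpow_pos_of_pos pi_pos _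
  have hP2 : P^2 = π ^ ((4:ℝ)/3) := by
    rw [hP_def, ← Real.rpow_natCast (π ^ ((2:ℝ)/3)) 2, ← Real.rpow_mul pi_pos.le]
    norm_num
  have hP3 : P^3 = π^2 := by
    rw [hP_def, ← Real.rpow_natCast (π ^ ((2:ℝ)/3)) 3, ← Real.rpow_mul pi_pos.le]
    norm_num
  have hP4 : P^4 ≤ π^3 := by
    rw [hP_def, ← Real.rpow_natCast (π ^ ((2:ℝ)/3)) 4, ← Real.rpow_mul pi_pos.le,
      show ((2:ℝ)/3 * ((4:ℕ):ℝ)) = 8/3 by push_cast; norm_num]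
    calc π ^ ((8:ℝ)/3) ≤ π ^ ((3:ℕ):ℝ) := by
          apply Real.rpow_le_rpow_of_exponent_le hπ1; push_cast; norm_num
      _ = π ^ 3 := Real.rpow_natCast _ _
  have hsqrtM : Real.sqrt (π ^ ((4:ℝ)/3)) = P := by
    rw [← hP2, Real.sqrt_sq hP0.le]
  rw [hsqrtM]
  rw [show π ^ ((4:ℝ)/3) = P^2 from hP2.symm]
  clear_value P
  clear hsqrtM hP_def
  -- small bound on P^2 * t
  have hPπ : P ≤ π := by nlinarith [hP4, pi_gt_three, pow_pos hP0 4]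
  have hMt_lt : P^2 * t < 1/2 := by nlinarith [pi_lt_d2, hP0, sq_nonneg P]
  have hMt0 : 0 < P^2 * t := by positivity
  have hs0 : 0 < π ^ 2 / 4 - P^2 * t := by nlinarith [pi_gt_three]
  set μ : ℝ := Real.sqrt (π ^ 2 / 4 - P^2 * t) with hμ_def
  have hμ0 : 0 < μ := Real.sqrt_pos.mpr hs0
  have hμsq : μ^2 = π ^ 2 / 4 - P^2 * t := Real.sq_sqrt hs0.le
  clear_value μ
  clear hμ_def
  have hμlt : μ < π/2 := by nlinarith [hμsq, hμ0, hMt0, pi_pos]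
  set ε : ℝ := π/2 - μ with hε_def
  have hε0 : 0 < ε := by rw [hε_def]; linarith
  have hμε : π - 2*ε = 2*μ := by rw [hε_def]; ring
  have hPt : P^2 * t = ε * (π - ε) := by rw [hε_def]; nlinarith [hμsq]
  clear_value ε
  clear hε_def
  have hε1 : ε < 1 := by
    by_contra h
    push_neg at h
    have hεπ : ε < π/2 := by nlinarith [hμε, hμ0]
    nlinarith [hPt, hMt_lt, pi_gt_three]
  -- trig facts
  have hμeq : μ = π/2 - ε := by linarith [hμε]
  have hcos : Real.cos μ = Real.sin ε := by rw [hμeq, Real.cos_pi_div_two_sub]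
  have hsin : Real.sin μ = Real.cos ε := by rw [hμeq, Real.sin_pi_div_two_sub]
  have ha0 : 0 < Real.sin ε := Real.sin_pos_of_pos_of_lt_pi hε0 (by nlinarith [pi_gt_three])
  have haε : Real.sin ε ≤ ε := (Real.sin_lt hε0).le
  have hb0 : 0 < Real.cos ε :=
    Real.cos_pos_of_mem_Ioo ⟨by nlinarith [pi_gt_three], by nlinarith [pi_gt_three]⟩
  have hblow : 1 - ε^2/2 ≤ Real.cos ε := Real.one_sub_sq_div_two_le_cos
  -- integrals
  have hderiv : ∀ x : ℝ, deriv (fun y => Real.cos (μ * y)) x = -Real.sin (μ*x) * μ := by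
    intro x
    have h1 : HasDerivAt (fun y : ℝ => μ * y) μ x := by
      simpa using (hasDerivAt_id x).const_mul μ
    exact ((Real.hasDerivAt_cos (μ*x)).comp x h1).deriv
  have hI1 : (∫ x in (0:ℝ)..1, deriv (fun y => Real.cos (μ * y)) x ^ 2)
      = μ^2 * (1/2 - Real.sin μ * Real.cos μ/(2*μ)) := by
    rw [show (fun x => deriv (fun y => Real.cos (μ * y)) x ^ 2)
        = fun x => μ^2 * Real.sin (μ*x)^2 by funext x; rw [hderiv x]; ring]
    rw [intervalIntegral.integral_const_mul, int_sin_sq' μ hμ0.ne']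
  have hI2 : (∫ x in (0:ℝ)..1, Real.cos (μ * x) ^ 2)
      = 1/2 + Real.sin μ * Real.cos μ/(2*μ) := int_cos_sq' μ hμ0.ne'
  rw [hI1, hI2, hsin, hcos]
  rw [show π ^ 2 / 4 - P^2 * t - (-100) * t^2 = μ^2 + 100*t^2 by rw [hμsq]; ring]
  have hfin := aux_ineq t P μ ε (Real.sin ε) (Real.cos ε) ht0 hP0 hP3 hP4 hμ0 hμε
    hε0 hε1 ha0 haε hb0 hblow hPt
  refine le_trans (le_of_eq ?_) hfin
  ring
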